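/- The poset P_𝓛 is pure if and only if the following conditions hold: (a) for every s ∈ [t] and all i, k ∈ [p_s, q_s] with i ≤ k, if ε_i > 1 and ε_k > 1 then u_k − u_i = 2(k − i); (b) for every s ∈ [t] and all i, k ∈ [p_s, q_s] with i ≤ k, if θ_{i−1} > 1 and θ_{k−1} > 1 then v_k − v_i = 2(k − i); (c) for every s ∈ [t], Δ_{p_s} + i_s − p_s = Δ_1 + i_1 − 1. -/

import Mathlib

namespace LadderPaper

/-- The tuple `a_{i,j}`: entry `t` is `u t` for `t < i` and `max (j + (t - i)) (u t)` for
`t ≥ i` (indices `t ∈ [1,n]`; entries outside `[1,n]` are set to `0`). -/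
def atuple (u : ℕ → ℤ) (n i : ℕ) (j : ℤ) : ℕ → ℤ := fun t =>
  if 1 ≤ t ∧ t ≤ n then
    (if t < i then u t else max (j + ((t : ℤ) - (i : ℤ))) (u t))
  else 0

/-- The tuple `b_{i,j}`: like `a_{i,j}` but with `i`-th entry `j - 1`. -/
def btuple (u : ℕ → ℤ) (n i : ℕ) (j : ℤ) : ℕ → ℤ := fun t =>
  if 1 ≤ t ∧ t ≤ n then
    (if t < i then u t
     else if t = i then j - 1
     else max (j + ((t : ℤ) - (i : ℤ))) (u t))
  else 0

/-- The tuple `(u_1, …, u_n)`. -/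
def utuple (u : ℕ → ℤ) (n : ℕ) : ℕ → ℤ := fun t =>
  if 1 ≤ t ∧ t ≤ n then u t else 0

/-- The lattice `𝓛` of tuples `c` with `u t ≤ c t ≤ v t` for `t ∈ [1,n]`, strictly
increasing entries, and (normalization) `c t = 0` outside `[1,n]`.  It carries the
componentwise (induced product) order. -/
def ladderL (n : ℕ) (u v : ℕ → ℤ) : Set (ℕ → ℤ) :=
  {c | (∀ t, 1 ≤ t → t ≤ n → u t ≤ c t ∧ c t ≤ v t) ∧
       (∀ t, 1 ≤ t → t + 1 ≤ n → c t < c (t + 1)) ∧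
       (∀ t, t = 0 ∨ n < t → c t = 0)}

/-- The set `P_𝓛 = { a_{i,j} : i ∈ [n], j ∈ [u_i + 1, v_i] }`. -/
def PL (n : ℕ) (u v : ℕ → ℤ) : Set (ℕ → ℤ) :=
  {x | ∃ i : ℕ, ∃ j : ℤ, 1 ≤ i ∧ i ≤ n ∧ u i + 1 ≤ j ∧ j ≤ v i ∧ x = atuple u n i j}

/-- The product poset `𝓛 × [r]`. -/
def ladderLr (n : ℕ) (u v : ℕ → ℤ) (r : ℤ) : Set ((ℕ → ℤ) × ℤ) :=
  {p | p.1 ∈ ladderL n u v ∧ 1 ≤ p.2 ∧ p.2 ≤ r}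

/-- The set `P_{𝓛×[r]} = { (a_{i,j}, 1) } ∪ { ((u_1,…,u_n), k) : k ∈ [2,r] }`. -/
def PLr (n : ℕ) (u v : ℕ → ℤ) (r : ℤ) : Set ((ℕ → ℤ) × ℤ) :=
  {p | (p.1 ∈ PL n u v ∧ p.2 = 1) ∨ (p.1 = utuple u n ∧ 2 ≤ p.2 ∧ p.2 ≤ r)}

/-- `ε_i > 1`, with the convention `ε_n > 1` (i.e. `i = n` or `u_{i+1} - u_i > 1`). -/
def epsGt1 (u : ℕ → ℤ) (n i : ℕ) : Prop := i = n ∨ 1 < u (i + 1) - u i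

/-- `θ_{i-1} > 1`, with the convention `θ_0 > 1` (i.e. `i = 1` or `v_i - v_{i-1} > 1`). -/
def thetaGt1 (v : ℕ → ℤ) (i : ℕ) : Prop := i = 1 ∨ 1 < v i - v (i - 1)

/-- Membership in `C = { i ∈ [n-1] : v_i < u_{i+1} } ∪ { n }`. -/
def inC (n : ℕ) (u v : ℕ → ℤ) (i : ℕ) : Prop :=
  (1 ≤ i ∧ i + 1 ≤ n ∧ v i < u (i + 1)) ∨ i = n

/-- The set `C = { i ∈ [n-1] : v_i < u_{i+1} } ∪ { n }`. -/
def Cset (n : ℕ) (u v : ℕ → ℤ) : Set ℕ :=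
  {i | 1 ≤ i ∧ i + 1 ≤ n ∧ v i < u (i + 1)} ∪ {n}

/-- `[p,q]` is one of the blocks `[p_s, q_s]` determined by `C`: `q ∈ C`,
no element of `C` lies in `[p, q-1]`, and either `p = 1` or `p - 1 ∈ C`. -/
def IsBlock (n : ℕ) (u v : ℕ → ℤ) (p q : ℕ) : Prop :=
  1 ≤ p ∧ p ≤ q ∧ q ≤ n ∧ inC n u v q ∧
    (∀ j, p ≤ j → j < q → ¬ inC n u v j) ∧ (p = 1 ∨ inC n u v (p - 1))

/-- `i0 = min { i ∈ [p,q] : ε_i > 1 }` (with the convention `ε_n > 1`). -/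
def IsBlockMin (n : ℕ) (u : ℕ → ℤ) (p q i0 : ℕ) : Prop :=
  p ≤ i0 ∧ i0 ≤ q ∧ epsGt1 u n i0 ∧ ∀ j, p ≤ j → j < i0 → ¬ epsGt1 u n j

/-- The comparability graph of a poset: two distinct elements are adjacent
iff they are comparable. -/
def compGraph (α : Type*) [Preorder α] : SimpleGraph α where
  Adj x y := x ≠ y ∧ (x ≤ y ∨ y ≤ x)
  symm := ⟨fun x y h => ⟨Ne.symm h.1, Or.symm h.2⟩⟩
  loopless := ⟨fun x h => h.1 rfl⟩

/-- A poset is pure if all of its maximal chains have the same cardinality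
(equivalently, the same length). -/
def IsPure (α : Type*) [Preorder α] : Prop :=
  ∀ A B : Set α, IsMaxChain (· ≤ ·) A → IsMaxChain (· ≤ ·) B → A.ncard = B.ncard

section Generic

variable {α : Type*} [PartialOrder α]

lemma maxChain_nonempty [Nonempty α] {A : Set α} (hA : IsMaxChain (· ≤ ·) A) :
    A.Nonempty := by
  rcases Set.eq_empty_or_nonempty A with h | h
  · obtain ⟨x⟩ := ‹Nonempty α›
    have hx : IsChain (· ≤ ·) ({x} : Set α) := Set.Subsingleton.isChain (by simp)
    have := hA.2 hx (by simp [h])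
    simp [h] at this
  · exact h

lemma chain_exists_least {A : Set α} (hA : IsChain (· ≤ ·) A) (hfin : A.Finite)
    (hne : A.Nonempty) : ∃ a ∈ A, ∀ x ∈ A, a ≤ x := by
  obtain ⟨a, ha, hmin⟩ := Set.Finite.exists_minimalFor id A hfin hne
  refine ⟨a, ha, fun x hx => ?_⟩
  rcases eq_or_ne x a with rfl | hxa
  · exact le_refl x
  · rcases hA hx ha hxa with h | h
    · exact hmin hx h
    · exact h

lemma chain_exists_greatest {A : Set α} (hA : IsChain (· ≤ ·) A) (hfin : A.Finite)
    (hne : A.Nonempty) : ∃ b ∈ A, ∀ x ∈ A, x ≤ b := by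
  obtain ⟨b, hb, hmax⟩ := Set.Finite.exists_maximalFor id A hfin hne
  refine ⟨b, hb, fun x hx => ?_⟩
  rcases eq_or_ne x b with rfl | hxb
  · exact le_refl x
  · rcases hA hx hb hxb with h | h
    · exact h
    · exact hmax hx h

lemma maxChain_least_isMin {A : Set α} (hA : IsMaxChain (· ≤ ·) A) {a : α}
    (ha : a ∈ A) (hle : ∀ x ∈ A, a ≤ x) : IsMin a := by
  intro b hba
  by_contra hab
  have hbA : b ∉ A := fun hb => hab (hle b hb)
  have hchain : IsChain (· ≤ ·) (insert b A) := by
    intro x hx y hy hxy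
    rcases hx with rfl | hx
    · rcases hy with rfl | hy
      · exact absurd rfl hxy
      · exact Or.inl (le_trans hba (hle y hy))
    · rcases hy with rfl | hy
      · exact Or.inr (le_trans hba (hle x hx))
      · exact hA.1 hx hy hxy
  have := hA.2 hchain (Set.subset_insert _ _)
  exact hbA (this ▸ Set.mem_insert b A)

lemma maxChain_greatest_isMax {A : Set α} (hA : IsMaxChain (· ≤ ·) A) {b : α}
    (hb : b ∈ A) (hle : ∀ x ∈ A, x ≤ b) : IsMax b := by
  intro c hbc
  by_contra hcb
  have hcA : c ∉ A := fun hc => hcb (hle c hc)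
  have hchain : IsChain (· ≤ ·) (insert c A) := by
    intro x hx y hy hxy
    rcases hx with rfl | hx
    · rcases hy with rfl | hy
      · exact absurd rfl hxy
      · exact Or.inr (le_trans (hle y hy) hbc)
    · rcases hy with rfl | hy
      · exact Or.inl (le_trans (hle x hx) hbc)
      · exact hA.1 hx hy hxy
  have := hA.2 hchain (Set.subset_insert _ _)
  exact hcA (this ▸ Set.mem_insert c A)

variable (ρ : α → ℤ)

/-- Saturation property of a maximal chain with respect to a gap-filling ρ. -/
lemma maxChain_sat
    (hmono : ∀ ⦃x y : α⦄, x < y → ρ x < ρ y)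
    (hgap : ∀ ⦃x y : α⦄, x < y → ρ x + 1 < ρ y → ∃ z, x < z ∧ z < y)
    {A : Set α} (hA : IsMaxChain (· ≤ ·) A) :
    ∀ x ∈ A, ∀ y ∈ A, x < y → (∃ z ∈ A, x < z ∧ z < y) ∨ ρ y = ρ x + 1 := by
  intro x hx y hy hxy
  by_contra hcon
  push_neg at hcon
  obtain ⟨h1, h2⟩ := hcon
  have hmono' : ρ x < ρ y := hmono hxy
  have hgap' : ρ x + 1 < ρ y := lt_of_le_of_ne (by omega) (fun h => h2 h.symm)
  obtain ⟨z, hxz, hzy⟩ := hgap hxy hgap'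
  have hzA : z ∉ A := fun hz => h1 z hz hxz hzy
  have hchain : IsChain (· ≤ ·) (insert z A) := by
    intro p hp q hq hpq
    rcases hp with rfl | hp
    · rcases hq with rfl | hq
      · exact absurd rfl hpq
      · rcases eq_or_ne q x with rfl | hqx
        · exact Or.inr hxz.le
        rcases eq_or_ne q y with rfl | hqy
        · exact Or.inl hzy.le
        rcases hA.1 hq hx hqx with h | h
        · exact Or.inr (le_trans h hxz.le)
        · rcases hA.1 hq hy hqy with h' | h' 
          · -- x ≤ q ≤ y, q ≠ x, q ≠ y ⇒ x < q < y contradiction with h1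
            exact absurd (h1 q hq (lt_of_le_of_ne h (Ne.symm hqx))) (by simpa using lt_of_le_of_ne h' hqy)
          · exact Or.inl (le_trans hzy.le h')
    · rcases hq with rfl | hq
      · rcases eq_or_ne p x with rfl | hpx
        · exact Or.inl hxz.le
        rcases eq_or_ne p y with rfl | hpy
        · exact Or.inr hzy.le
        rcases hA.1 hp hx hpx with h | h
        · exact Or.inl (le_trans h hxz.le)
        · rcases hA.1 hp hy hpy with h' | h'
          · exact absurd (h1 p hp (lt_of_le_of_ne h (Ne.symm hpx))) (by simpa using lt_of_le_of_ne h' hpy)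
          · exact Or.inr (le_trans hzy.le h')
      · exact hA.1 hp hq hpq
  have := hA.2 hchain (Set.subset_insert _ _)
  exact hzA (this ▸ Set.mem_insert z A)

/-- Cardinality of a finite saturated chain with endpoints. -/
lemma chain_ncard
    (hmono : ∀ ⦃x y : α⦄, x < y → ρ x < ρ y) :
    ∀ N : ℕ, ∀ A : Set α, A.Finite → A.ncard ≤ N → IsChain (· ≤ ·) A →
      (∀ x ∈ A, ∀ y ∈ A, x < y → (∃ z ∈ A, x < z ∧ z < y) ∨ ρ y = ρ x + 1) →
      ∀ a b : α, a ∈ A → b ∈ A → (∀ x ∈ A, a ≤ x ∧ x ≤ b) →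
      (A.ncard : ℤ) = ρ b - ρ a + 1 := by
  intro N
  induction N with
  | zero =>
    intro A hfin hcard _ _ a _ ha _ _
    have : A.ncard ≠ 0 := by
      have := Set.ncard_pos hfin |>.mpr ⟨a, ha⟩
      omega
    omega
  | succ N ih =>
    intro A hfin hcard hchain hsat a b ha hb hbd
    rcases Set.eq_empty_or_nonempty (A \ {a}) with hA' | hA'
    · -- A = {a}
      have hAa : A = {a} := by
        apply Set.eq_of_subset_of_subset
        · intro x hx
          rcases eq_or_ne x a with rfl | hxa
          · simp
          · exact absurd (Set.mem_diff_singleton.mpr ⟨hx, hxa⟩) (by simp [hA'])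
        · simpa using ha
      have hba : b = a := by
        have := hAa ▸ hb; simpa using this
      subst hba
      simp [hAa]
    · set A' := A \ {a} with hA'def
      have hfin' : A'.Finite := hfin.diff
      have hchain' : IsChain (· ≤ ·) A' := hchain.mono Set.diff_subset
      obtain ⟨b', hb'A, hb'le⟩ := chain_exists_least hchain' hfin' hA'
      have hb'A2 : b' ∈ A := hb'A.1
      have hab' : a < b' := lt_of_le_of_ne (hbd b' hb'A2).1 (Ne.symm hb'A.2)
      have hstep : ρ b' = ρ a + 1 := by
        rcases hsat a ha b' hb'A2 hab' with ⟨z, hzA, haz, hzb'⟩ | h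
        · have hz' : z ∈ A' := Set.mem_diff_singleton.mpr ⟨hzA, (ne_of_gt haz)⟩
          exact absurd (hb'le z hz') hzb'.not_ge
        · exact h
      have hba : b ≠ a := by
        rintro rfl
        obtain ⟨x, hx⟩ := hA'
        have := hbd x hx.1
        exact hx.2 (le_antisymm this.2 this.1)
      have hbA' : b ∈ A' := Set.mem_diff_singleton.mpr ⟨hb, hba⟩
      have hsat' : ∀ x ∈ A', ∀ y ∈ A', x < y →
          (∃ z ∈ A', x < z ∧ z < y) ∨ ρ y = ρ x + 1 := by
        intro x hx y hy hxy
        rcases hsat x hx.1 y hy.1 hxy with ⟨z, hzA, hxz, hzy⟩ | h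
        · refine Or.inl ⟨z, Set.mem_diff_singleton.mpr ⟨hzA, ?_⟩, hxz, hzy⟩
          exact ne_of_gt (lt_of_le_of_lt (hbd x hx.1).1 hxz)
        · exact Or.inr h
      have hncard : A'.ncard + 1 = A.ncard := Set.ncard_diff_singleton_add_one ha hfin
      have hcard' : A'.ncard ≤ N := by omega
      have hbd' : ∀ x ∈ A', b' ≤ x ∧ x ≤ b := fun x hx => ⟨hb'le x hx, (hbd x hx.1).2⟩
      have := ih A' hfin' hcard' hchain' hsat' b' b hb'A hbA' hbd'
      have : (A.ncard : ℤ) = (A'.ncard : ℤ) + 1 := by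
        rw [← hncard]; push_cast; ring
      omega

theorem isPure_iff_const [Nonempty α] [Finite α]
    (hmono : ∀ ⦃x y : α⦄, x < y → ρ x < ρ y)
    (hgap : ∀ ⦃x y : α⦄, x < y → ρ x + 1 < ρ y → ∃ z, x < z ∧ z < y) :
    IsPure α ↔ ∀ a b a' b' : α, IsMin a → IsMax b → a ≤ b →
      IsMin a' → IsMax b' → a' ≤ b' → ρ b - ρ a = ρ b' - ρ a' := by
  have key : ∀ A : Set α, IsMaxChain (· ≤ ·) A →
      ∃ a b : α, IsMin a ∧ IsMax b ∧ a ≤ b ∧ (A.ncard : ℤ) = ρ b - ρ a + 1 := by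
    intro A hA
    have hfin : A.Finite := Set.toFinite A
    have hne : A.Nonempty := maxChain_nonempty hA
    obtain ⟨a, ha, hale⟩ := chain_exists_least hA.1 hfin hne
    obtain ⟨b, hb, hble⟩ := chain_exists_greatest hA.1 hfin hne
    refine ⟨a, b, maxChain_least_isMin hA ha hale, maxChain_greatest_isMax hA hb hble,
      hale b hb, ?_⟩
    exact chain_ncard ρ hmono A.ncard A hfin le_rfl hA.1 (maxChain_sat ρ hmono hgap hA)
      a b ha hb (fun x hx => ⟨hale x hx, hble x hx⟩)
  have build : ∀ a b : α, IsMin a → IsMax b → a ≤ b →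
      ∃ A : Set α, IsMaxChain (· ≤ ·) A ∧ (A.ncard : ℤ) = ρ b - ρ a + 1 := by
    intro a b hmin hmax hab
    have hpair : IsChain (· ≤ ·) ({a, b} : Set α) := by
      intro x hx y hy hxy
      simp only [Set.mem_insert_iff, Set.mem_singleton_iff] at hx hy
      rcases hx with rfl | rfl <;> rcases hy with rfl | rfl
      · exact absurd rfl hxy
      · exact Or.inl hab
      · exact Or.inr hab
      · exact absurd rfl hxy
    obtain ⟨M, hM, hsub⟩ := hpair.exists_maxChain
    have hfin : M.Finite := Set.toFinite M
    have hne : M.Nonempty := maxChain_nonempty hM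
    obtain ⟨a0, ha0, ha0le⟩ := chain_exists_least hM.1 hfin hne
    obtain ⟨b0, hb0, hb0le⟩ := chain_exists_greatest hM.1 hfin hne
    have haM : a ∈ M := hsub (by simp)
    have hbM : b ∈ M := hsub (by simp)
    have ha0a : a0 = a := le_antisymm (ha0le a haM) (hmin (ha0le a haM))
    have hb0b : b0 = b := le_antisymm (hmax (hb0le b hbM)) (hb0le b hbM)
    subst ha0a hb0b
    refine ⟨M, hM, ?_⟩
    exact chain_ncard ρ hmono M.ncard M hfin le_rfl hM.1 (maxChain_sat ρ hmono hgap hM)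
      a0 b0 ha0 hb0 (fun x hx => ⟨ha0le x hx, hb0le x hx⟩)
  constructor
  · intro hpure a b a' b' hmina hmaxb hab hmina' hmaxb' hab'
    obtain ⟨A, hA, hcA⟩ := build a b hmina hmaxb hab
    obtain ⟨B, hB, hcB⟩ := build a' b' hmina' hmaxb' hab'
    have := hpure A B hA hB
    omega
  · intro hconst A B hA hB
    obtain ⟨a, b, h1, h2, h3, h4⟩ := key A hA
    obtain ⟨a', b', h1', h2', h3', h4'⟩ := key B hB
    have := hconst a b a' b' h1 h2 h3 h1' h2' h3'
    omega

end Generic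

section Seq

variable {n m : ℕ} {u v : ℕ → ℤ}

/-- Bundle of the standing hypotheses. -/
structure Hyp (n m : ℕ) (u v : ℕ → ℤ) : Prop where
  hn : 1 ≤ n
  hu1 : u 1 = 1
  humono : ∀ i, 1 ≤ i → i + 1 ≤ n → u i < u (i + 1)
  hv1 : 1 < v 1
  hvmono : ∀ i, 1 ≤ i → i + 1 ≤ n → v i < v (i + 1)
  hvn : v n = (m : ℤ)
  huv : ∀ i, 1 ≤ i → i ≤ n → u i < v i
  hstep : ∀ i, 1 ≤ i → i + 1 ≤ n → u (i + 1) ≤ v i + 1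

lemma Hyp.alpha_mono (H : Hyp n m u v) :
    ∀ k, k ≤ n → ∀ i, 1 ≤ i → i ≤ k → u i - (i : ℤ) ≤ u k - (k : ℤ) := by
  intro k
  induction k with
  | zero => intro _ i h1 h2; omega
  | succ k ih =>
    intro hkn i h1 h2
    rcases Nat.eq_or_lt_of_le h2 with rfl | hlt
    · omega
    · have h2' : i ≤ k := by omega
      have hk1 : 1 ≤ k := le_trans h1 h2'
      have := ih (by omega) i h1 h2'
      have := H.humono k hk1 (by omega)
      push_cast
      omega

lemma Hyp.beta_mono (H : Hyp n m u v) :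
    ∀ k, k ≤ n → ∀ i, 1 ≤ i → i ≤ k → v i - (i : ℤ) ≤ v k - (k : ℤ) := by
  intro k
  induction k with
  | zero => intro _ i h1 h2; omega
  | succ k ih =>
    intro hkn i h1 h2
    rcases Nat.eq_or_lt_of_le h2 with rfl | hlt
    · omega
    · have h2' : i ≤ k := by omega
      have hk1 : 1 ≤ k := le_trans h1 h2'
      have := ih (by omega) i h1 h2'
      have := H.hvmono k hk1 (by omega)
      push_cast
      omega

lemma Hyp.u_mono (H : Hyp n m u v) :
    ∀ k, k ≤ n → ∀ i, 1 ≤ i → i ≤ k → u i + ((k : ℤ) - (i : ℤ)) ≤ u k := by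
  intro k
  induction k with
  | zero => intro _ i h1 h2; omega
  | succ k ih =>
    intro hkn i h1 h2
    rcases Nat.eq_or_lt_of_le h2 with rfl | hlt
    · omega
    · have h2' : i ≤ k := by omega
      have hk1 : 1 ≤ k := le_trans h1 h2'
      have := ih (by omega) i h1 h2'
      have := H.humono k hk1 (by omega)
      push_cast
      omega

lemma Hyp.v_mono (H : Hyp n m u v) :
    ∀ k, k ≤ n → ∀ i, 1 ≤ i → i ≤ k → v i + ((k : ℤ) - (i : ℤ)) ≤ v k := by
  intro k
  induction k with
  | zero => intro _ i h1 h2; omega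
  | succ k ih =>
    intro hkn i h1 h2
    rcases Nat.eq_or_lt_of_le h2 with rfl | hlt
    · omega
    · have h2' : i ≤ k := by omega
      have hk1 : 1 ≤ k := le_trans h1 h2'
      have := ih (by omega) i h1 h2'
      have := H.hvmono k hk1 (by omega)
      push_cast
      omega

lemma Hyp.u_ge_one (H : Hyp n m u v) {i : ℕ} (h1 : 1 ≤ i) (h2 : i ≤ n) : 1 ≤ u i := by
  have := H.u_mono i h2 1 le_rfl h1
  have := H.hu1
  omega

lemma Hyp.v_le_m (H : Hyp n m u v) {i : ℕ} (h1 : 1 ≤ i) (h2 : i ≤ n) : v i ≤ (m : ℤ) := by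
  have := H.v_mono n le_rfl i h1 h2
  have := H.hvn
  omega

lemma Hyp.eps_flat (H : Hyp n m u v) :
    ∀ k, k ≤ n → ∀ i, 1 ≤ i → i ≤ k →
      (∀ j, i ≤ j → j < k → ¬ epsGt1 u n j) → u k - u i = (k : ℤ) - (i : ℤ) := by
  intro k
  induction k with
  | zero => intro _ i h1 h2 _; omega
  | succ k ih =>
    intro hkn i h1 h2 hflat
    rcases Nat.eq_or_lt_of_le h2 with rfl | hlt
    · omega
    · have h2' : i ≤ k := by omega
      have hk1 : 1 ≤ k := le_trans h1 h2'
      have hrec := ih (by omega) i h1 h2' (fun j hj1 hj2 => hflat j hj1 (by omega))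
      have hne : ¬ epsGt1 u n k := hflat k h2' (by omega)
      rw [epsGt1] at hne
      push_neg at hne
      have := H.humono k hk1 (by omega)
      have := hne.2
      push_cast
      omega

lemma Hyp.theta_flat (H : Hyp n m u v) :
    ∀ k, k ≤ n → ∀ i, 1 ≤ i → i ≤ k →
      (∀ j, i < j → j ≤ k → ¬ thetaGt1 v j) → v k - v i = (k : ℤ) - (i : ℤ) := by
  intro k
  induction k with
  | zero => intro _ i h1 h2 _; omega
  | succ k ih =>
    intro hkn i h1 h2 hflat
    rcases Nat.eq_or_lt_of_le h2 with rfl | hlt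
    · omega
    · have h2' : i ≤ k := by omega
      have hk1 : 1 ≤ k := le_trans h1 h2'
      have hrec := ih (by omega) i h1 h2' (fun j hj1 hj2 => hflat j hj1 (by omega))
      have hne : ¬ thetaGt1 v (k + 1) := hflat (k + 1) (by omega) le_rfl
      rw [thetaGt1] at hne
      push_neg at hne
      have := H.hvmono k hk1 (by omega)
      have h2 := hne.2
      simp only [Nat.add_sub_cancel] at h2
      push_cast
      omega

end Seq

section Tuples

variable {n m : ℕ} {u v : ℕ → ℤ}

/-- Validity of parameters. -/
def Valid (n : ℕ) (u v : ℕ → ℤ) (i : ℕ) (j : ℤ) : Prop :=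
  1 ≤ i ∧ i ≤ n ∧ u i + 1 ≤ j ∧ j ≤ v i

lemma mem_PL_iff {x : ℕ → ℤ} :
    x ∈ PL n u v ↔ ∃ i j, Valid n u v i j ∧ x = atuple u n i j := by
  constructor
  · rintro ⟨i, j, h1, h2, h3, h4, h5⟩; exact ⟨i, j, ⟨h1, h2, h3, h4⟩, h5⟩
  · rintro ⟨i, j, ⟨h1, h2, h3, h4⟩, h5⟩; exact ⟨i, j, h1, h2, h3, h4, h5⟩

lemma atuple_le_iff (H : Hyp n m u v) {i k : ℕ} {j l : ℤ}
    (hij : Valid n u v i j) (hkl : Valid n u v k l) :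
    atuple u n i j ≤ atuple u n k l ↔ k ≤ i ∧ j + (k : ℤ) ≤ l + (i : ℤ) := by
  obtain ⟨hi1, hin, hju, hjv⟩ := hij
  obtain ⟨hk1, hkn, hlu, hlv⟩ := hkl
  constructor
  · intro h
    have hki : k ≤ i := by
      by_contra hik
      push_neg at hik
      have hh := h i
      simp only [atuple, if_pos (And.intro hi1 hin), lt_irrefl, if_neg (lt_irrefl i),
        if_pos hik] at hh
      have : j + ((i : ℤ) - (i : ℤ)) ≤ u i := le_trans (le_max_left _ _) hh
      omega
    refine ⟨hki, ?_⟩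
    have hh := h i
    have hik : ¬ i < k := by omega
    simp only [atuple, if_pos (And.intro hi1 hin), if_neg (lt_irrefl i), if_neg hik] at hh
    have h1 : j + ((i : ℤ) - (i : ℤ)) ≤ max (l + ((i : ℤ) - (k : ℤ))) (u i) :=
      le_trans (le_max_left _ _) hh
    rcases le_max_iff.mp h1 with h2 | h2
    · omega
    · omega
  · rintro ⟨hki, hd⟩ t
    simp only [atuple]
    by_cases ht : 1 ≤ t ∧ t ≤ n
    · simp only [if_pos ht]
      by_cases htk : t < k
      · have hti : t < i := by omega
        simp [if_pos htk, if_pos hti]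
      · simp only [if_neg htk]
        by_cases hti : t < i
        · simp only [if_pos hti]
          exact le_max_right _ _
        · simp only [if_neg hti]
          exact max_le_max (by omega) le_rfl
    · simp [if_neg ht]

lemma atuple_inj (H : Hyp n m u v) {i k : ℕ} {j l : ℤ}
    (hij : Valid n u v i j) (hkl : Valid n u v k l)
    (h : atuple u n i j = atuple u n k l) : i = k ∧ j = l := by
  have h1 := (atuple_le_iff H hij hkl).mp h.le
  have h2 := (atuple_le_iff H hkl hij).mp h.ge
  omega

lemma PL_finite (H : Hyp n m u v) : (PL n u v).Finite := by
  have hsub : PL n u v ⊆ (fun p : ℕ × ℤ => atuple u n p.1 p.2) ''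
      ((Set.Icc 1 n) ×ˢ (Set.Icc (2 : ℤ) (m : ℤ))) := by
    rintro x ⟨i, j, h1, h2, h3, h4, h5⟩
    refine ⟨(i, j), ⟨⟨h1, h2⟩, ?_, ?_⟩, h5.symm⟩
    · have := H.u_ge_one h1 h2; omega
    · have := H.v_le_m h1 h2; omega
  exact Set.Finite.subset (Set.Finite.image _ (Set.Finite.prod (Set.finite_Icc _ _)
    (Set.finite_Icc _ _))) hsub

lemma PL_nonempty (H : Hyp n m u v) : (PL n u v).Nonempty := by
  refine ⟨atuple u n 1 (u 1 + 1), 1, u 1 + 1, le_rfl, H.hn, le_rfl, ?_, rfl⟩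
  have := H.huv 1 le_rfl H.hn
  omega

end Tuples

section MinMax

variable {n m : ℕ} {u v : ℕ → ℤ}

lemma valid_mem_PL {i : ℕ} {j : ℤ} (h : Valid n u v i j) :
    atuple u n i j ∈ PL n u v :=
  ⟨i, j, h.1, h.2.1, h.2.2.1, h.2.2.2, rfl⟩

lemma isMin_iff (H : Hyp n m u v) {i : ℕ} {j : ℤ} (hij : Valid n u v i j) :
    IsMin (⟨atuple u n i j, valid_mem_PL hij⟩ : ↥(PL n u v)) ↔
      j = u i + 1 ∧ epsGt1 u n i := by
  obtain ⟨hi1, hin, hju, hjv⟩ := hij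
  constructor
  · intro hmin
    by_contra hcon
    rw [not_and_or] at hcon
    rcases hcon with hj | heps
    · have hj' : u i + 1 ≤ j - 1 := by omega
      have hval : Valid n u v i (j - 1) := ⟨hi1, hin, hj', by omega⟩
      have hle : atuple u n i (j - 1) ≤ atuple u n i j :=
        (atuple_le_iff H hval ⟨hi1, hin, hju, hjv⟩).mpr ⟨le_rfl, by omega⟩
      have := hmin (Subtype.mk_le_mk.mpr hle :
        (⟨atuple u n i (j - 1), valid_mem_PL hval⟩ : ↥(PL n u v)) ≤ _)
      have := (atuple_le_iff H ⟨hi1, hin, hju, hjv⟩ hval).mp (Subtype.mk_le_mk.mp this)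
      omega
    · rw [epsGt1, not_or] at heps
      obtain ⟨hne, hflat⟩ := heps
      have hi1n : i + 1 ≤ n := by omega
      have hmon := H.humono i hi1 hi1n
      have hu2 : u (i + 1) = u i + 1 := by omega
      have hval : Valid n u v (i + 1) (u (i + 1) + 1) :=
        ⟨by omega, hi1n, le_rfl, by have := H.huv (i + 1) (by omega) hi1n; omega⟩
      have hle : atuple u n (i + 1) (u (i + 1) + 1) ≤ atuple u n i j :=
        (atuple_le_iff H hval ⟨hi1, hin, hju, hjv⟩).mpr ⟨by omega, by push_cast; omega⟩
      have := hmin (Subtype.mk_le_mk.mpr hle :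
        (⟨atuple u n (i + 1) (u (i + 1) + 1), valid_mem_PL hval⟩ : ↥(PL n u v)) ≤ _)
      have := (atuple_le_iff H ⟨hi1, hin, hju, hjv⟩ hval).mp (Subtype.mk_le_mk.mp this)
      omega
  · rintro ⟨hj, heps⟩
    intro y hyx
    obtain ⟨r, s, hrs, hy⟩ := mem_PL_iff.mp y.2
    have hyx' : atuple u n r s ≤ atuple u n i j := by
      rw [← hy]; exact hyx
    have h1 := (atuple_le_iff H hrs ⟨hi1, hin, hju, hjv⟩).mp hyx'
    have hxy : atuple u n i j ≤ atuple u n r s := by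
      rcases Nat.eq_or_lt_of_le h1.1 with rfl | hir
      · refine (atuple_le_iff H ⟨hi1, hin, hju, hjv⟩ hrs).mpr ⟨le_rfl, ?_⟩
        have := hrs.2.2.1
        omega
      · exfalso
        rcases heps with rfl | heps
        · have := hrs.2.1; omega
        · have halpha := H.alpha_mono r hrs.2.1 (i + 1) (by omega) hir
          have := hrs.2.2.1
          push_cast at halpha ⊢
          omega
    have hyeq : y = (⟨atuple u n r s, valid_mem_PL hrs⟩ : ↥(PL n u v)) := Subtype.ext hy
    rw [hyeq]
    exact Subtype.mk_le_mk.mpr hxy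

lemma isMax_iff (H : Hyp n m u v) {i : ℕ} {j : ℤ} (hij : Valid n u v i j) :
    IsMax (⟨atuple u n i j, valid_mem_PL hij⟩ : ↥(PL n u v)) ↔
      j = v i ∧ thetaGt1 v i := by
  obtain ⟨hi1, hin, hju, hjv⟩ := hij
  constructor
  · intro hmax
    by_contra hcon
    rw [not_and_or] at hcon
    rcases hcon with hj | hth
    · have hval : Valid n u v i (j + 1) := ⟨hi1, hin, by omega, by omega⟩
      have hle : atuple u n i j ≤ atuple u n i (j + 1) :=
        (atuple_le_iff H ⟨hi1, hin, hju, hjv⟩ hval).mpr ⟨le_rfl, by omega⟩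
      have := hmax (Subtype.mk_le_mk.mpr hle :
        _ ≤ (⟨atuple u n i (j + 1), valid_mem_PL hval⟩ : ↥(PL n u v)))
      have := (atuple_le_iff H hval ⟨hi1, hin, hju, hjv⟩).mp (Subtype.mk_le_mk.mp this)
      omega
    · rw [thetaGt1, not_or] at hth
      obtain ⟨hne, hflat⟩ := hth
      have hi2 : 2 ≤ i := by omega
      have hmon := H.hvmono (i - 1) (by omega) (by omega)
      rw [Nat.sub_add_cancel (by omega)] at hmon
      have hv2 : v (i - 1) = v i - 1 := by omega
      have hval : Valid n u v (i - 1) (v (i - 1)) :=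
        ⟨by omega, by omega, by have := H.huv (i - 1) (by omega) (by omega); omega, le_rfl⟩
      have hle : atuple u n i j ≤ atuple u n (i - 1) (v (i - 1)) := by
        refine (atuple_le_iff H ⟨hi1, hin, hju, hjv⟩ hval).mpr ⟨by omega, ?_⟩
        have : ((i - 1 : ℕ) : ℤ) = (i : ℤ) - 1 := by
          push_cast [Nat.cast_sub (by omega : 1 ≤ i)]; ring
        omega
      have := hmax (Subtype.mk_le_mk.mpr hle :
        _ ≤ (⟨atuple u n (i - 1) (v (i - 1)), valid_mem_PL hval⟩ : ↥(PL n u v)))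
      have := (atuple_le_iff H hval ⟨hi1, hin, hju, hjv⟩).mp (Subtype.mk_le_mk.mp this)
      omega
  · rintro ⟨hj, hth⟩
    intro y hyx
    obtain ⟨r, s, hrs, hy⟩ := mem_PL_iff.mp y.2
    have hyx' : atuple u n i j ≤ atuple u n r s := by
      rw [← hy]; exact hyx
    have h1 := (atuple_le_iff H ⟨hi1, hin, hju, hjv⟩ hrs).mp hyx'
    have hxy : atuple u n r s ≤ atuple u n i j := by
      rcases Nat.eq_or_lt_of_le h1.1 with rfl | hri
      · refine (atuple_le_iff H hrs ⟨hi1, hin, hju, hjv⟩).mpr ⟨le_rfl, ?_⟩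
        have := hrs.2.2.2
        omega
      · exfalso
        rcases hth with rfl | hth
        · have := hrs.1; omega
        · have hbeta := H.beta_mono (i - 1) (by omega) r hrs.1 (by omega)
          have hsv := hrs.2.2.2
          have : ((i - 1 : ℕ) : ℤ) = (i : ℤ) - 1 := by
            push_cast [Nat.cast_sub (by omega : 1 ≤ i)]; ring
          omega
    have hyeq : y = (⟨atuple u n r s, valid_mem_PL hrs⟩ : ↥(PL n u v)) := Subtype.ext hy
    rw [hyeq]
    exact Subtype.mk_le_mk.mpr hxy

end MinMax

section Rho

variable {n m : ℕ} {u v : ℕ → ℤ}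

noncomputable def rho (n : ℕ) (u v : ℕ → ℤ) (x : ↥(PL n u v)) : ℤ :=
  x.2.choose_spec.choose - 2 * (x.2.choose : ℤ)

lemma rho_spec (H : Hyp n m u v) {i : ℕ} {j : ℤ} (hij : Valid n u v i j)
    (hx : atuple u n i j ∈ PL n u v) :
    rho n u v ⟨atuple u n i j, hx⟩ = j - 2 * (i : ℤ) := by
  obtain ⟨h1, h2, h3, h4, h5⟩ := hx.choose_spec.choose_spec
  have hinj := atuple_inj H ⟨h1, h2, h3, h4⟩ hij h5.symm
  show hx.choose_spec.choose - 2 * (hx.choose : ℤ) = j - 2 * (i : ℤ)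
  omega

lemma mk_lt_mk (H : Hyp n m u v) {i k : ℕ} {j l : ℤ}
    (hij : Valid n u v i j) (hkl : Valid n u v k l)
    (h1 : k ≤ i) (h2 : j + (k : ℤ) ≤ l + (i : ℤ)) (h3 : ¬(i = k ∧ j = l)) :
    (⟨atuple u n i j, valid_mem_PL hij⟩ : ↥(PL n u v)) <
      ⟨atuple u n k l, valid_mem_PL hkl⟩ := by
  refine lt_of_le_of_ne (Subtype.mk_le_mk.mpr ((atuple_le_iff H hij hkl).mpr ⟨h1, h2⟩)) ?_
  intro he
  exact h3 (atuple_inj H hij hkl (congrArg Subtype.val he))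

lemma rho_mono (H : Hyp n m u v) {x y : ↥(PL n u v)} (hxy : x < y) :
    rho n u v x < rho n u v y := by
  obtain ⟨i, j, hij, hx⟩ := mem_PL_iff.mp x.2
  obtain ⟨k, l, hkl, hy⟩ := mem_PL_iff.mp y.2
  have hxe : x = ⟨atuple u n i j, valid_mem_PL hij⟩ := Subtype.ext hx
  have hye : y = ⟨atuple u n k l, valid_mem_PL hkl⟩ := Subtype.ext hy
  rw [hxe, hye] at hxy
  have hle := (atuple_le_iff H hij hkl).mp (Subtype.mk_le_mk.mp hxy.le)
  have hne : ¬(i = k ∧ j = l) := by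
    rintro ⟨rfl, rfl⟩
    exact absurd rfl hxy.ne
  rw [hxe, hye, rho_spec H hij, rho_spec H hkl]
  omega

lemma rho_gap (H : Hyp n m u v) {x y : ↥(PL n u v)} (hxy : x < y)
    (hg : rho n u v x + 1 < rho n u v y) : ∃ z, x < z ∧ z < y := by
  obtain ⟨i, j, hij, hx⟩ := mem_PL_iff.mp x.2
  obtain ⟨k, l, hkl, hy⟩ := mem_PL_iff.mp y.2
  have hxe : x = ⟨atuple u n i j, valid_mem_PL hij⟩ := Subtype.ext hx
  have hye : y = ⟨atuple u n k l, valid_mem_PL hkl⟩ := Subtype.ext hy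
  subst hxe hye
  have hle := (atuple_le_iff H hij hkl).mp (Subtype.mk_le_mk.mp hxy.le)
  rw [rho_spec H hij, rho_spec H hkl] at hg
  obtain ⟨hi1, hin, hju, hjv⟩ := hij
  obtain ⟨hk1, hkn, hlu, hlv⟩ := hkl
  rcases Nat.eq_or_lt_of_le hle.1 with heq | hki
  · -- same row
    subst heq
    have hval : Valid n u v k (j + 1) := ⟨hk1, hkn, by omega, by omega⟩
    exact ⟨⟨atuple u n k (j + 1), valid_mem_PL hval⟩,
      mk_lt_mk H ⟨hi1, hin, hju, hjv⟩ hval le_rfl (by omega) (by omega),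
      mk_lt_mk H hval ⟨hk1, hkn, hlu, hlv⟩ le_rfl (by omega) (by omega)⟩
  · rcases eq_or_lt_of_le hle.2 with heq | hlt
    · -- same diagonal, go to row i - 1
      have hik2 : k + 2 ≤ i := by omega
      have halpha := H.alpha_mono i hin (i - 1) (by omega) (by omega)
      have hbeta := H.beta_mono (i - 1) (by omega) k hk1 (by omega)
      have hval : Valid n u v (i - 1) (j - 1) := ⟨by omega, by omega, by omega, by omega⟩
      refine ⟨⟨atuple u n (i - 1) (j - 1), valid_mem_PL hval⟩,
        mk_lt_mk H ⟨hi1, hin, hju, hjv⟩ hval (by omega) (by omega) (by omega),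
        mk_lt_mk H hval ⟨hk1, hkn, hlu, hlv⟩ (by omega) (by omega) (by omega)⟩
    · -- same row i, diagonal of y
      have hbeta := H.beta_mono i hin k hk1 (by omega)
      have hval : Valid n u v i (l + ((i : ℤ) - (k : ℤ))) :=
        ⟨hi1, hin, by omega, by omega⟩
      refine ⟨⟨atuple u n i (l + ((i : ℤ) - (k : ℤ))), valid_mem_PL hval⟩,
        mk_lt_mk H ⟨hi1, hin, hju, hjv⟩ hval le_rfl (by omega) (by omega),
        mk_lt_mk H hval ⟨hk1, hkn, hlu, hlv⟩ (by omega) (by omega) (by omega)⟩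

/-- A "min–max comparable pair" of indices. -/
def MMpair (n : ℕ) (u v : ℕ → ℤ) (i k : ℕ) : Prop :=
  (1 ≤ i ∧ i ≤ n ∧ epsGt1 u n i) ∧ (1 ≤ k ∧ k ≤ n ∧ thetaGt1 v k) ∧
    k ≤ i ∧ u i + 1 + (k : ℤ) ≤ v k + (i : ℤ)

lemma pure_iff_Dconst (H : Hyp n m u v) :
    IsPure ↥(PL n u v) ↔ ∀ i k i' k', MMpair n u v i k → MMpair n u v i' k' →
      (v k - 2 * (k : ℤ)) - (u i - 2 * (i : ℤ)) =
        (v k' - 2 * (k' : ℤ)) - (u i' - 2 * (i' : ℤ)) := by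
  have hfin : (PL n u v).Finite := PL_finite H
  have hne : (PL n u v).Nonempty := PL_nonempty H
  have : Finite ↥(PL n u v) := hfin.to_subtype
  have : Nonempty ↥(PL n u v) := hne.to_subtype
  rw [isPure_iff_const (rho n u v) (fun x y h => rho_mono H h) (fun x y h hg => rho_gap H h hg)]
  constructor
  · intro h i k i' k' hp hp'
    obtain ⟨⟨hi1, hin, heps⟩, ⟨hk1, hkn, hth⟩, hki, hcomp⟩ := hp
    obtain ⟨⟨hi1', hin', heps'⟩, ⟨hk1', hkn', hth'⟩, hki', hcomp'⟩ := hp'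
    have hvi : Valid n u v i (u i + 1) := ⟨hi1, hin, le_rfl, by have := H.huv i hi1 hin; omega⟩
    have hvk : Valid n u v k (v k) := ⟨hk1, hkn, by have := H.huv k hk1 hkn; omega, le_rfl⟩
    have hvi' : Valid n u v i' (u i' + 1) :=
      ⟨hi1', hin', le_rfl, by have := H.huv i' hi1' hin'; omega⟩
    have hvk' : Valid n u v k' (v k') :=
      ⟨hk1', hkn', by have := H.huv k' hk1' hkn'; omega, le_rfl⟩
    have hmin := (isMin_iff H hvi).mpr ⟨rfl, heps⟩
    have hmax := (isMax_iff H hvk).mpr ⟨rfl, hth⟩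
    have hmin' := (isMin_iff H hvi').mpr ⟨rfl, heps'⟩
    have hmax' := (isMax_iff H hvk').mpr ⟨rfl, hth'⟩
    have hab : (⟨atuple u n i (u i + 1), valid_mem_PL hvi⟩ : ↥(PL n u v)) ≤
        ⟨atuple u n k (v k), valid_mem_PL hvk⟩ :=
      Subtype.mk_le_mk.mpr ((atuple_le_iff H hvi hvk).mpr ⟨hki, by omega⟩)
    have hab' : (⟨atuple u n i' (u i' + 1), valid_mem_PL hvi'⟩ : ↥(PL n u v)) ≤
        ⟨atuple u n k' (v k'), valid_mem_PL hvk'⟩ :=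
      Subtype.mk_le_mk.mpr ((atuple_le_iff H hvi' hvk').mpr ⟨hki', by omega⟩)
    have := h _ _ _ _ hmin hmax hab hmin' hmax' hab'
    rw [rho_spec H hvi, rho_spec H hvk, rho_spec H hvi', rho_spec H hvk'] at this
    omega
  · intro h a b a' b' hmina hmaxb hab hmina' hmaxb' hab'
    obtain ⟨i, j, hij, hxa⟩ := mem_PL_iff.mp a.2
    obtain ⟨k, l, hkl, hxb⟩ := mem_PL_iff.mp b.2
    obtain ⟨i', j', hij', hxa'⟩ := mem_PL_iff.mp a'.2
    obtain ⟨k', l', hkl', hxb'⟩ := mem_PL_iff.mp b'.2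
    have hae : a = ⟨atuple u n i j, valid_mem_PL hij⟩ := Subtype.ext hxa
    have hbe : b = ⟨atuple u n k l, valid_mem_PL hkl⟩ := Subtype.ext hxb
    have hae' : a' = ⟨atuple u n i' j', valid_mem_PL hij'⟩ := Subtype.ext hxa'
    have hbe' : b' = ⟨atuple u n k' l', valid_mem_PL hkl'⟩ := Subtype.ext hxb'
    subst hae hbe hae' hbe'
    obtain ⟨hju, hepsi⟩ := (isMin_iff H hij).mp hmina
    obtain ⟨hlv, hthk⟩ := (isMax_iff H hkl).mp hmaxb
    obtain ⟨hju', hepsi'⟩ := (isMin_iff H hij').mp hmina'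
    obtain ⟨hlv', hthk'⟩ := (isMax_iff H hkl').mp hmaxb'
    have hle := (atuple_le_iff H hij hkl).mp (Subtype.mk_le_mk.mp hab)
    have hle' := (atuple_le_iff H hij' hkl').mp (Subtype.mk_le_mk.mp hab')
    have hmm : MMpair n u v i k :=
      ⟨⟨hij.1, hij.2.1, hepsi⟩, ⟨hkl.1, hkl.2.1, hthk⟩, hle.1, by
        have := hle.2; omega⟩
    have hmm' : MMpair n u v i' k' :=
      ⟨⟨hij'.1, hij'.2.1, hepsi'⟩, ⟨hkl'.1, hkl'.2.1, hthk'⟩, hle'.1, by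
        have := hle'.2; omega⟩
    have := h i k i' k' hmm hmm'
    rw [rho_spec H hij, rho_spec H hkl, rho_spec H hij', rho_spec H hkl']
    omega

end Rho

section Blocks

variable {n m : ℕ} {u v : ℕ → ℤ}

lemma no_cross (H : Hyp n m u v) {i k : ℕ} (hp : MMpair n u v i k) :
    ∀ c, k ≤ c → c < i → ¬ inC n u v c := by
  obtain ⟨⟨hi1, hin, _⟩, ⟨hk1, hkn, _⟩, hki, hcomp⟩ := hp
  intro c hkc hci hc
  rcases hc with ⟨hc1, hcn, hvc⟩ | rfl
  · have hb := H.beta_mono c (by omega) k hk1 hkc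
    have ha := H.alpha_mono i hin (c + 1) (by omega) (by omega)
    push_cast at hb ha ⊢
    omega
  · omega

lemma thetaGt1_blockstart (H : Hyp n m u v) {p q : ℕ} (hb : IsBlock n u v p q) :
    thetaGt1 v p := by
  obtain ⟨hp1, hpq, hqn, _, _, hp⟩ := hb
  rcases hp with rfl | hp
  · exact Or.inl rfl
  · rcases hp with ⟨hc1, hcn, hvc⟩ | hpn
    · right
      have hpe : p - 1 + 1 = p := by omega
      rw [hpe] at hvc hcn
      have := H.huv p (by omega) (by omega)
      omega
    · omega

lemma epsGt1_of_inC (H : Hyp n m u v) {c : ℕ} (hc : inC n u v c) (hc1 : 1 ≤ c) :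
    epsGt1 u n c := by
  rcases hc with ⟨h1, h2, h3⟩ | rfl
  · right
    have := H.huv c h1 (by omega)
    omega
  · exact Or.inl rfl

lemma exists_blockMin {p q : ℕ} (hq : epsGt1 u n q) (hpq : p ≤ q) :
    ∃ i0, i0 ≤ q ∧ IsBlockMin n u p q i0 := by
  classical
  have hex : ∃ t, p ≤ t ∧ epsGt1 u n t := ⟨q, hpq, hq⟩
  set i0 := Nat.find hex with hi0
  have hspec := Nat.find_spec hex
  have hle : i0 ≤ q := Nat.find_min' hex ⟨hpq, hq⟩
  refine ⟨i0, hle, hspec.1, hle, hspec.2, fun j hpj hji => ?_⟩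
  intro hj
  exact Nat.find_min hex hji ⟨hpj, hj⟩

lemma exists_block (H : Hyp n m u v) {i k : ℕ} (hk1 : 1 ≤ k) (hki : k ≤ i)
    (hin : i ≤ n) (hnc : ∀ c, k ≤ c → c < i → ¬ inC n u v c) :
    ∃ p q, IsBlock n u v p q ∧ p ≤ k ∧ i ≤ q := by
  classical
  have hex : ∃ c, i ≤ c ∧ inC n u v c := ⟨n, hin, Or.inr rfl⟩
  set q := Nat.find hex with hq
  have hqspec := Nat.find_spec hex
  have hqn : q ≤ n := Nat.find_min' hex ⟨hin, Or.inr rfl⟩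
  set g := Nat.findGreatest (inC n u v) (k - 1) with hg
  have hgk : g ≤ k - 1 := Nat.findGreatest_le _
  have hpk : g + 1 ≤ k := by omega
  refine ⟨g + 1, q, ⟨by omega, by omega, hqn, hqspec.2, ?_, ?_⟩, hpk, hqspec.1⟩
  · intro j hpj hjq hj
    by_cases hjk : j ≤ k - 1
    · exact absurd hj (Nat.findGreatest_is_greatest (by omega) hjk)
    · by_cases hji : j < i
      · exact hnc j (by omega) hji hj
      · exact Nat.find_min hex hjq ⟨by omega, hj⟩
  · rcases Nat.eq_zero_or_pos g with hg0 | hg0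
    · left; omega
    · right
      have hgg : g + 1 - 1 = g := by omega
      rw [hgg]
      have hne : ¬ (Nat.findGreatest (inC n u v) (k - 1) = 0) := by omega
      rw [Nat.findGreatest_eq_zero_iff] at hne
      push_neg at hne
      obtain ⟨t, ht0, htk, htP⟩ := hne
      have := Nat.findGreatest_spec htk htP
      rw [← hg] at this
      exact this

end Blocks

section MainArith

variable {n m : ℕ} {u v : ℕ → ℤ}

/-- Abbreviation for the constancy hypothesis. -/
def Dc (n : ℕ) (u v : ℕ → ℤ) : Prop :=
  ∀ i k i' k', MMpair n u v i k → MMpair n u v i' k' →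
    (v k - 2 * (k : ℤ)) - (u i - 2 * (i : ℤ)) =
      (v k' - 2 * (k' : ℤ)) - (u i' - 2 * (i' : ℤ))

lemma consecA (H : Hyp n m u v) (hD : Dc n u v) {p q i k : ℕ}
    (hb : IsBlock n u v p q) (hpi : p ≤ i) (hik : i < k) (hkq : k ≤ q)
    (hei : epsGt1 u n i) (hek : epsGt1 u n k)
    (hmid : ∀ j, i < j → j < k → ¬ epsGt1 u n j) :
    u k - u i = 2 * ((k : ℤ) - (i : ℤ)) := by
  classical
  have hp1 : 1 ≤ p := hb.1
  have hqn : q ≤ n := hb.2.2.1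
  have hkn : k ≤ n := by omega
  have hin : i ≤ n := by omega
  have hPp : p ≤ p ∧ thetaGt1 v p := ⟨le_rfl, thetaGt1_blockstart H hb⟩
  set κ := Nat.findGreatest (fun t => p ≤ t ∧ thetaGt1 v t) i with hκdef
  have hκp : p ≤ κ := le_trans le_rfl (Nat.le_findGreatest hpi hPp)
  have hκi : κ ≤ i := Nat.findGreatest_le _
  have hκP : p ≤ κ ∧ thetaGt1 v κ :=
    Nat.findGreatest_spec (P := fun t => p ≤ t ∧ thetaGt1 v t) hpi hPp
  have hnth : ∀ j, κ < j → j ≤ i → ¬ thetaGt1 v j := by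
    intro j h1 h2 hth
    exact (Nat.findGreatest_is_greatest h1 h2) ⟨by omega, hth⟩
  have hflatθ : v i - v κ = (i : ℤ) - (κ : ℤ) :=
    H.theta_flat i hin κ (by omega) hκi hnth
  have hflatε : u k - u (i + 1) = (k : ℤ) - ((i + 1 : ℕ) : ℤ) :=
    H.eps_flat k hkn (i + 1) (by omega) (by omega) (fun j h1 h2 => hmid j (by omega) h2)
  have hiC : ¬ inC n u v i := hb.2.2.2.2.1 i hpi (by omega)
  have hui1 : u (i + 1) ≤ v i := by
    by_contra hcon
    push_neg at hcon
    exact hiC (Or.inl ⟨by omega, by omega, hcon⟩)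
  have huvi := H.huv i (by omega) hin
  have hpair1 : MMpair n u v i κ :=
    ⟨⟨by omega, hin, hei⟩, ⟨by omega, by omega, hκP.2⟩, hκi, by omega⟩
  have hpair2 : MMpair n u v k κ :=
    ⟨⟨by omega, hkn, hek⟩, ⟨by omega, by omega, hκP.2⟩, by omega, by
      push_cast at hflatε ⊢
      omega⟩
  have := hD i κ k κ hpair1 hpair2
  omega

lemma consecB (H : Hyp n m u v) (hD : Dc n u v) {p q i k : ℕ}
    (hb : IsBlock n u v p q) (hpi : p ≤ i) (hik : i < k) (hkq : k ≤ q)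
    (hti : thetaGt1 v i) (htk : thetaGt1 v k)
    (hmid : ∀ j, i < j → j < k → ¬ thetaGt1 v j) :
    v k - v i = 2 * ((k : ℤ) - (i : ℤ)) := by
  classical
  have hp1 : 1 ≤ p := hb.1
  have hqn : q ≤ n := hb.2.2.1
  have hkn : k ≤ n := by omega
  have hin : i ≤ n := by omega
  have hqe : epsGt1 u n q := epsGt1_of_inC H hb.2.2.2.1 (by omega)
  have hex : ∃ t, k ≤ t ∧ epsGt1 u n t := ⟨q, hkq, hqe⟩
  set ι := Nat.find hex with hιdef
  have hspec := Nat.find_spec hex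
  have hιq : ι ≤ q := Nat.find_min' hex ⟨hkq, hqe⟩
  have hkι : k ≤ ι := hspec.1
  have hιe : epsGt1 u n ι := hspec.2
  have hflatε : u ι - u k = (ι : ℤ) - (k : ℤ) :=
    H.eps_flat ι (by omega) k (by omega) hkι
      (fun j h1 h2 hj => Nat.find_min hex h2 ⟨h1, hj⟩)
  have hflatθ : v (k - 1) - v i = ((k - 1 : ℕ) : ℤ) - (i : ℤ) :=
    H.theta_flat (k - 1) (by omega) i (by omega) (by omega)
      (fun j h1 h2 hth => hmid j h1 (by omega) hth)
  have hke : k - 1 + 1 = k := by omega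
  have hC : ¬ inC n u v (k - 1) := hb.2.2.2.2.1 (k - 1) (by omega) (by omega)
  have huk : u k ≤ v (k - 1) := by
    by_contra hcon
    push_neg at hcon
    refine hC (Or.inl ⟨by omega, by omega, ?_⟩)
    rw [hke]
    exact hcon
  have huvk := H.huv k (by omega) hkn
  have hpair1 : MMpair n u v ι k :=
    ⟨⟨by omega, by omega, hιe⟩, ⟨by omega, hkn, htk⟩, hkι, by omega⟩
  have hpair2 : MMpair n u v ι i :=
    ⟨⟨by omega, by omega, hιe⟩, ⟨by omega, hin, hti⟩, by omega, by
      push_cast at hflatθ ⊢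
      omega⟩
  have := hD ι k ι i hpair1 hpair2
  omega

lemma condA_of_Dconst (H : Hyp n m u v) (hD : Dc n u v) :
    ∀ p q, IsBlock n u v p q → ∀ i k, p ≤ i → i ≤ k → k ≤ q →
      epsGt1 u n i → epsGt1 u n k → u k - u i = 2 * ((k : ℤ) - (i : ℤ)) := by
  intro p q hb
  have main : ∀ d, ∀ i k, k - i = d → p ≤ i → i ≤ k → k ≤ q →
      epsGt1 u n i → epsGt1 u n k → u k - u i = 2 * ((k : ℤ) - (i : ℤ)) := by
    intro d
    induction d using Nat.strong_induction_on with
    | _ d ih =>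
      intro i k hd hpi hik hkq hei hek
      rcases Nat.eq_or_lt_of_le hik with heq | hlt
      · subst heq; omega
      · by_cases hex : ∃ j, i < j ∧ j < k ∧ epsGt1 u n j
        · obtain ⟨j, h1, h2, h3⟩ := hex
          have e1 := ih (j - i) (by omega) i j rfl hpi (by omega) (by omega) hei h3
          have e2 := ih (k - j) (by omega) j k rfl (by omega) (by omega) hkq h3 hek
          omega
        · push_neg at hex
          exact consecA H hD hb hpi hlt hkq hei hek hex
  intro i k hpi hik hkq hei hek
  exact main (k - i) i k rfl hpi hik hkq hei hek

lemma condB_of_Dconst (H : Hyp n m u v) (hD : Dc n u v) :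
    ∀ p q, IsBlock n u v p q → ∀ i k, p ≤ i → i ≤ k → k ≤ q →
      thetaGt1 v i → thetaGt1 v k → v k - v i = 2 * ((k : ℤ) - (i : ℤ)) := by
  intro p q hb
  have main : ∀ d, ∀ i k, k - i = d → p ≤ i → i ≤ k → k ≤ q →
      thetaGt1 v i → thetaGt1 v k → v k - v i = 2 * ((k : ℤ) - (i : ℤ)) := by
    intro d
    induction d using Nat.strong_induction_on with
    | _ d ih =>
      intro i k hd hpi hik hkq hti htk
      rcases Nat.eq_or_lt_of_le hik with heq | hlt
      · subst heq; omega
      · by_cases hex : ∃ j, i < j ∧ j < k ∧ thetaGt1 v j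
        · obtain ⟨j, h1, h2, h3⟩ := hex
          have e1 := ih (j - i) (by omega) i j rfl hpi (by omega) (by omega) hti h3
          have e2 := ih (k - j) (by omega) j k rfl (by omega) (by omega) hkq h3 htk
          omega
        · push_neg at hex
          exact consecB H hD hb hpi hlt hkq hti htk hex
  intro i k hpi hik hkq hti htk
  exact main (k - i) i k rfl hpi hik hkq hti htk

lemma condC_of_Dconst (H : Hyp n m u v) (hD : Dc n u v) :
    ∀ p q i0 q1 i1, IsBlock n u v p q → IsBlockMin n u p q i0 →
      IsBlock n u v 1 q1 → IsBlockMin n u 1 q1 i1 →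
      (v p - u p) + (i0 : ℤ) - (p : ℤ) = (v 1 - u 1) + (i1 : ℤ) - 1 := by
  intro p q i0 q1 i1 hb hbm hb1 hbm1
  have hp1 : 1 ≤ p := hb.1
  have hqn : q ≤ n := hb.2.2.1
  have hq1n : q1 ≤ n := hb1.2.2.1
  have hi0q : i0 ≤ q := hbm.2.1
  have hi1q : i1 ≤ q1 := hbm1.2.1
  have hpq : p ≤ q := hb.2.1
  have hpi0 : p ≤ i0 := hbm.1
  have h1i1 : 1 ≤ i1 := hbm1.1
  have hflat0 : u i0 - u p = (i0 : ℤ) - (p : ℤ) :=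
    H.eps_flat i0 (by omega) p hp1 hbm.1 hbm.2.2.2
  have hflat1 : u i1 - u 1 = (i1 : ℤ) - (1 : ℤ) := by
    have := H.eps_flat i1 (by omega) 1 le_rfl hbm1.1 hbm1.2.2.2
    push_cast at this ⊢
    omega
  have hθp : thetaGt1 v p := thetaGt1_blockstart H hb
  have hθ1 : thetaGt1 v 1 := Or.inl rfl
  have huvp := H.huv p hp1 (by omega)
  have huv1 := H.huv 1 le_rfl H.hn
  have hpair0 : MMpair n u v i0 p :=
    ⟨⟨by omega, by omega, hbm.2.2.1⟩, ⟨hp1, by omega, hθp⟩, hbm.1, by omega⟩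
  have hpair1 : MMpair n u v i1 1 :=
    ⟨⟨by omega, by omega, hbm1.2.2.1⟩, ⟨le_rfl, H.hn, hθ1⟩, hbm1.1, by push_cast; omega⟩
  have := hD i0 p i1 1 hpair0 hpair1
  push_cast at this
  omega

end MainArith

section Converse

variable {n m : ℕ} {u v : ℕ → ℤ}

lemma D_reduce (H : Hyp n m u v)
    (hA : ∀ p q, IsBlock n u v p q → ∀ i k, p ≤ i → i ≤ k → k ≤ q →
      epsGt1 u n i → epsGt1 u n k → u k - u i = 2 * ((k : ℤ) - (i : ℤ)))
    (hB : ∀ p q, IsBlock n u v p q → ∀ i k, p ≤ i → i ≤ k → k ≤ q →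
      thetaGt1 v i → thetaGt1 v k → v k - v i = 2 * ((k : ℤ) - (i : ℤ)))
    {i k : ℕ} (hp : MMpair n u v i k) :
    ∃ p q i0, IsBlock n u v p q ∧ IsBlockMin n u p q i0 ∧
      (v k - 2 * (k : ℤ)) - (u i - 2 * (i : ℤ)) = (v p - u p) + (i0 : ℤ) - (p : ℤ) := by
  obtain ⟨⟨hi1, hin, hei⟩, ⟨hk1, hkn, htk⟩, hki, hcomp⟩ := hp
  obtain ⟨p, q, hb, hpk, hiq⟩ := exists_block H hk1 hki hin
    (no_cross H ⟨⟨hi1, hin, hei⟩, ⟨hk1, hkn, htk⟩, hki, hcomp⟩)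
  have hp1 : 1 ≤ p := hb.1
  have hpq : p ≤ q := hb.2.1
  have hqn : q ≤ n := hb.2.2.1
  have hqe : epsGt1 u n q := epsGt1_of_inC H hb.2.2.2.1 (by omega)
  obtain ⟨i0, hi0q, hbm⟩ := exists_blockMin hqe hpq
  refine ⟨p, q, i0, hb, hbm, ?_⟩
  have hpi0 : p ≤ i0 := hbm.1
  have hi0i : i0 ≤ i := by
    by_contra hcon
    push_neg at hcon
    exact hbm.2.2.2 i (by omega) hcon hei
  have hAe := hA p q hb i0 i hpi0 hi0i (by omega) hbm.2.2.1 hei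
  have hBe := hB p q hb p k le_rfl hpk (by omega) (thetaGt1_blockstart H hb) htk
  have hflat : u i0 - u p = (i0 : ℤ) - (p : ℤ) :=
    H.eps_flat i0 (by omega) p hp1 hpi0 hbm.2.2.2
  omega

lemma block_one (H : Hyp n m u v) :
    ∃ q1 i1, IsBlock n u v 1 q1 ∧ IsBlockMin n u 1 q1 i1 := by
  obtain ⟨p, q, hb, hp1, h1q⟩ := exists_block H le_rfl le_rfl H.hn
    (fun c h1 h2 _ => by omega)
  have hpe : p = 1 := le_antisymm hp1 hb.1
  subst hpe
  have hqe : epsGt1 u n q := epsGt1_of_inC H hb.2.2.2.1 (by have := hb.2.1; omega)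
  obtain ⟨i1, hi1q, hbm⟩ := exists_blockMin hqe hb.2.1
  exact ⟨q, i1, hb, hbm⟩

lemma Dconst_of_RHS (H : Hyp n m u v)
    (hA : ∀ p q, IsBlock n u v p q → ∀ i k, p ≤ i → i ≤ k → k ≤ q →
      epsGt1 u n i → epsGt1 u n k → u k - u i = 2 * ((k : ℤ) - (i : ℤ)))
    (hB : ∀ p q, IsBlock n u v p q → ∀ i k, p ≤ i → i ≤ k → k ≤ q →
      thetaGt1 v i → thetaGt1 v k → v k - v i = 2 * ((k : ℤ) - (i : ℤ)))
    (hC : ∀ p q i0 q1 i1, IsBlock n u v p q → IsBlockMin n u p q i0 →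
      IsBlock n u v 1 q1 → IsBlockMin n u 1 q1 i1 →
      (v p - u p) + (i0 : ℤ) - (p : ℤ) = (v 1 - u 1) + (i1 : ℤ) - 1) :
    Dc n u v := by
  intro i k i' k' hp hp'
  obtain ⟨q1, i1, hb1, hbm1⟩ := block_one H
  obtain ⟨p, q, i0, hb, hbm, he⟩ := D_reduce H hA hB hp
  obtain ⟨p', q'', i0', hb', hbm', he'⟩ := D_reduce H hA hB hp'
  have h1 := hC p q i0 q1 i1 hb hbm hb1 hbm1
  have h2 := hC p' q'' i0' q1 i1 hb' hbm' hb1 hbm1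
  omega

end Converse

theorem stmt15
    (n m : ℕ) (u v : ℕ → ℤ)
    (hn : 1 ≤ n) (hnm : n < m)
    (hu1 : u 1 = 1)
    (humono : ∀ i, 1 ≤ i → i + 1 ≤ n → u i < u (i + 1))
    (hum : u n < (m : ℤ))
    (hv1 : 1 < v 1)
    (hvmono : ∀ i, 1 ≤ i → i + 1 ≤ n → v i < v (i + 1))
    (hvn : v n = (m : ℤ))
    (huv : ∀ i, 1 ≤ i → i ≤ n → u i < v i)
    (hstep : ∀ i, 1 ≤ i → i + 1 ≤ n → u (i + 1) ≤ v i + 1) :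
    IsPure ↥(PL n u v) ↔
      ((∀ p q, IsBlock n u v p q → ∀ i k, p ≤ i → i ≤ k → k ≤ q →
          epsGt1 u n i → epsGt1 u n k → u k - u i = 2 * ((k : ℤ) - (i : ℤ))) ∧
       (∀ p q, IsBlock n u v p q → ∀ i k, p ≤ i → i ≤ k → k ≤ q →
          thetaGt1 v i → thetaGt1 v k → v k - v i = 2 * ((k : ℤ) - (i : ℤ))) ∧
       (∀ p q i0 q1 i1, IsBlock n u v p q → IsBlockMin n u p q i0 →
          IsBlock n u v 1 q1 → IsBlockMin n u 1 q1 i1 →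
          (v p - u p) + (i0 : ℤ) - (p : ℤ) = (v 1 - u 1) + (i1 : ℤ) - 1)) := by
  have H : Hyp n m u v := ⟨hn, hu1, humono, hv1, hvmono, hvn, huv, hstep⟩
  rw [pure_iff_Dconst H]
  constructor
  · intro hD
    exact ⟨condA_of_Dconst H hD, condB_of_Dconst H hD, condC_of_Dconst H hD⟩
  · rintro ⟨hA, hB, hC⟩
    exact Dconst_of_RHS H hA hB hC

end LadderPaper
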